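/- Perfect abstractions map intervened causal spaces to intervened causal spaces: let (f,ρ): 𝒞¹→𝒞² be a perfect abstraction, U¹=ρ⁻¹(U²) for U²⊆T², ℚ¹ a probability measure on (Ω¹,ℋ¹_{U¹}) and 𝕃¹ a causal mechanism on it with each L¹_{ρ⁻¹(S)}(·,A) measurable w.r.t. f⁻¹(ℋ²_S) for S⊆U². Set ℚ²=f_*ℚ¹ and let 𝕃² be the unique family with L²_S(f(ω),A)=L¹_{ρ⁻¹(S)}(ω,f⁻¹(A)). Then (f,ρ) is also a perfect abstraction from the intervened space (Ω¹,ℋ¹,(ℙ¹)^{do(U¹,ℚ¹)},(𝕂¹)^{do(U¹,ℚ¹,𝕃¹)}) to the intervened space (Ω²,ℋ²,(ℙ²)^{do(U²,ℚ²)},(𝕂²)^{do(U²,ℚ²,𝕃²)}); in particular f_*(ℙ¹)^{do(U¹,ℚ¹)} = (ℙ²)^{do(U²,ℚ²)}. -/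

import Mathlib

open MeasureTheory
open scoped Classical

/-- The sub-σ-algebra `ℋ_S` of the product σ-algebra on `∀ t, E t` generated by the
coordinates in `S`. -/
def piH {T : Type*} (E : T → Type*) [∀ t, MeasurableSpace (E t)] (S : Set T) :
    MeasurableSpace (∀ t, E t) :=
  ⨆ t ∈ S, MeasurableSpace.comap (fun ω => ω t) inferInstance

/-- A causal space on a product measurable space `(∀ t, E t, ⊗_t ℰ_t)`. -/
structure PiCausalSpace {T : Type*} (E : T → Type*) [∀ t, MeasurableSpace (E t)] where
  P : Measure (∀ t, E t)
  P_prob : IsProbabilityMeasure P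
  K : Set T → (∀ t, E t) → Measure (∀ t, E t)
  K_prob : ∀ S ω, IsProbabilityMeasure (K S ω)
  K_meas : ∀ (S : Set T) {A : Set (∀ t, E t)}, MeasurableSet A →
    Measurable[piH E S] fun ω => K S ω A
  K_empty : ∀ (ω : ∀ t, E t) {A : Set (∀ t, E t)}, MeasurableSet A → K ∅ ω A = P A
  K_inter : ∀ (S : Set T) (ω : ∀ t, E t) {A B : Set (∀ t, E t)},
    MeasurableSet[piH E S] A → MeasurableSet B →
    K S ω (A ∩ B) = A.indicator (fun _ => (1 : ENNReal)) ω * K S ω B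

section Helpers

variable {T : Type*} {E : T → Type*} [∀ t, MeasurableSpace (E t)]

lemma piH_le (S : Set T) : piH E S ≤ MeasurableSpace.pi :=
  iSup₂_le fun t _ => (measurable_pi_apply t).comap_le

lemma measurable_eval_piH {S : Set T} {t : T} (ht : t ∈ S) :
    Measurable[piH E S] fun ω : ∀ t, E t => ω t :=
  measurable_iff_comap_le.mpr
    (le_iSup₂ (f := fun (t : T) (_ : t ∈ S) =>
      MeasurableSpace.comap (fun ω : ∀ t, E t => ω t) inferInstance) t ht)

lemma measurable_to_piH {Ω : Type*} {m : MeasurableSpace Ω} {S : Set T}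
    {F : Ω → ∀ t, E t} (h : ∀ t ∈ S, Measurable fun ω => F ω t) :
    Measurable[m, piH E S] F := by
  rw [measurable_iff_comap_le]
  unfold piH
  rw [MeasurableSpace.comap_iSup]
  refine iSup_le fun t => ?_
  rw [MeasurableSpace.comap_iSup]
  refine iSup_le fun ht => ?_
  rw [MeasurableSpace.comap_comp]
  exact (h t ht).comap_le

/-- Sets in `piH E S` are cylinders over `S`. -/
lemma piH_mem_congr {S : Set T} {B : Set (∀ t, E t)}
    (hB : MeasurableSet[piH E S] B) {x y : ∀ t, E t}
    (hxy : ∀ t ∈ S, x t = y t) : x ∈ B ↔ y ∈ B := by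
  have hle : piH E S ≤ MeasurableSpace.comap S.restrict MeasurableSpace.pi := by
    refine iSup₂_le fun t ht => ?_
    have heq : (fun ω : ∀ t, E t => ω t) =
        (fun z : ∀ t : S, E t => z ⟨t, ht⟩) ∘ S.restrict := rfl
    rw [heq, ← MeasurableSpace.comap_comp]
    exact MeasurableSpace.comap_mono
      (Measurable.comap_le (measurable_pi_apply (⟨t, ht⟩ : S)))
  obtain ⟨B', -, rfl⟩ := MeasurableSpace.measurableSet_comap.mp (hle B hB)
  have hres : S.restrict x = S.restrict y := funext fun t => hxy t.1 t.2
  simp only [Set.mem_preimage, hres]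

end Helpers

/-- If `φ` is `ℋ²_{S'}`-measurable then `φ ∘ f` only depends on the coordinates in
`ρ⁻¹(S')`. -/
lemma abstract_congr {T1 T2 : Type*} {E1 : T1 → Type*} {E2 : T2 → Type*}
    [∀ t, MeasurableSpace (E1 t)] [∀ t, MeasurableSpace (E2 t)]
    {f : (∀ t, E1 t) → (∀ t, E2 t)} {ρ : T1 → T2}
    (hadm : ∀ S : Set T2, ∀ A : Set (∀ t, E2 t), MeasurableSet[piH E2 S] A →
      MeasurableSet[piH E1 (ρ ⁻¹' S)] (f ⁻¹' A))
    {S' : Set T2} {φ : (∀ t, E2 t) → ENNReal} (hφ : Measurable[piH E2 S'] φ)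
    {x y : ∀ t, E1 t} (hxy : ∀ t ∈ ρ ⁻¹' S', x t = y t) : φ (f x) = φ (f y) := by
  have hA : MeasurableSet[piH E2 S'] (φ ⁻¹' {φ (f y)}) :=
    hφ (measurableSet_singleton _)
  have := piH_mem_congr (hadm S' _ hA) hxy
  exact this.mpr rfl

/-- Perfect abstractions map intervened causal spaces to intervened causal
spaces.  Let `(f, ρ) : 𝒞¹ → 𝒞²` be a perfect abstraction (`f`, `ρ` surjective, `f`
measurable, `f_*ℙ¹ = ℙ²`, `K²_S(f(ω), A) = K¹_{ρ⁻¹(S)}(ω, f⁻¹(A))`, admissible), let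
`U¹ = ρ⁻¹(U²)`, `ℚ¹` a probability measure on `(Ω¹, ℋ¹_{U¹})`, `𝕃¹` a causal mechanism with
`L¹_{ρ⁻¹(S)}(·, A)` measurable w.r.t. `f⁻¹(ℋ²_S)` for `S ⊆ U²`, `ℚ² = f_*ℚ¹` and `𝕃²` the
unique family with `L²_S(f(ω), A) = L¹_{ρ⁻¹(S)}(ω, f⁻¹(A))`.  Then `(f, ρ)` is a perfect
abstraction between the intervened spaces: in particular the intervention measures satisfy
`f_*(ℙ¹)^{do(U¹,ℚ¹)} = (ℙ²)^{do(U²,ℚ²)}` and the intervention causal kernels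
`K^{do}_S(ω, A) = ∫ L_{S∩U}(ω, dω'_U) K_{S∪U}((ω_{S∖U}, ω'_U), A)` satisfy interventional
consistency along `f`. -/
theorem perfect_abstraction_of_intervened_spaces
    {T1 T2 : Type*} (E1 : T1 → Type*) (E2 : T2 → Type*)
    [∀ t, MeasurableSpace (E1 t)] [∀ t, MeasurableSpace (E2 t)]
    (C1 : PiCausalSpace E1) (C2 : PiCausalSpace E2)
    (f : (∀ t, E1 t) → (∀ t, E2 t)) (ρ : T1 → T2)
    (hf : Measurable f) (hfsurj : Function.Surjective f) (hρsurj : Function.Surjective ρ)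
    (hadm : ∀ S : Set T2, ∀ A : Set (∀ t, E2 t), MeasurableSet[piH E2 S] A →
      MeasurableSet[piH E1 (ρ ⁻¹' S)] (f ⁻¹' A))
    (hdist : Measure.map f C1.P = C2.P)
    (hint : ∀ S : Set T2, ∀ A : Set (∀ t, E2 t), MeasurableSet A → ∀ ω,
      C2.K S (f ω) A = C1.K (ρ ⁻¹' S) ω (f ⁻¹' A))
    (U2 : Set T2)
    (Q1 : @Measure (∀ t, E1 t) (piH E1 (ρ ⁻¹' U2)))
    (hQ1 : @IsProbabilityMeasure _ (piH E1 (ρ ⁻¹' U2)) Q1)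
    (Q2 : @Measure (∀ t, E2 t) (piH E2 U2))
    (hQ2 : Q2 = @Measure.map _ _ (piH E1 (ρ ⁻¹' U2)) (piH E2 U2) f Q1)
    (L1 : Set T1 → (∀ t, E1 t) → Measure (∀ t, E1 t))
    (hL1prob : ∀ S ω, IsProbabilityMeasure (L1 S ω))
    (hL1meas : ∀ S : Set T2, S ⊆ U2 → ∀ A : Set (∀ t, E1 t), MeasurableSet A →
      Measurable[MeasurableSpace.comap f (piH E2 S)] fun ω => L1 (ρ ⁻¹' S) ω A)
    (L2 : Set T2 → (∀ t, E2 t) → Measure (∀ t, E2 t))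
    (hL2 : ∀ S : Set T2, S ⊆ U2 → ∀ (ω) (A : Set (∀ t, E2 t)), MeasurableSet A →
      L2 S (f ω) A = L1 (ρ ⁻¹' S) ω (f ⁻¹' A)) :
    -- distributional consistency of the intervened spaces: f_*(ℙ¹)^{do} = (ℙ²)^{do}
    (∀ A : Set (∀ t, E2 t), MeasurableSet A →
      ∫⁻ ω, C2.K U2 ω A ∂Q2 = ∫⁻ ω, C1.K (ρ ⁻¹' U2) ω (f ⁻¹' A) ∂Q1) ∧
    -- interventional consistency of the intervened causal mechanisms:
    -- (K²)^{do}_S(f(ω), A) = (K¹)^{do}_{ρ⁻¹(S)}(ω, f⁻¹(A))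
    (∀ S : Set T2, ∀ A : Set (∀ t, E2 t), MeasurableSet A → ∀ ω : ∀ t, E1 t,
      ∫⁻ ω', C2.K (S ∪ U2) (U2.piecewise ω' (f ω)) A ∂(L2 (S ∩ U2) (f ω))
        = ∫⁻ ω', C1.K (ρ ⁻¹' S ∪ ρ ⁻¹' U2) ((ρ ⁻¹' U2).piecewise ω' ω) (f ⁻¹' A)
            ∂(L1 (ρ ⁻¹' S ∩ ρ ⁻¹' U2) ω)) := by
  constructor
  · -- distributional consistency
    intro A hA
    have h1 : @Measurable _ _ (piH E1 (ρ ⁻¹' U2)) (piH E2 U2) f :=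
      fun s hs => hadm U2 s hs
    rw [hQ2, @MeasureTheory.lintegral_map _ _ (piH E1 (ρ ⁻¹' U2)) (piH E2 U2) _ _ _ (C2.K_meas U2 hA) h1]
    exact lintegral_congr fun ω => hint U2 A hA ω
  · -- interventional consistency
    intro S A hA ω
    set μ := L1 (ρ ⁻¹' S ∩ ρ ⁻¹' U2) ω with hμ
    -- the intervened kernel integrand on the abstract side
    set g : (∀ t, E2 t) → ENNReal := fun ω₂ => C2.K (S ∪ U2) ω₂ A with hg
    have hgmeas : Measurable[piH E2 (S ∪ U2)] g := C2.K_meas (S ∪ U2) hA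
    -- L2 (S ∩ U2) (f ω) is the pushforward of L1 (ρ⁻¹(S∩U2)) ω
    have hL2map : L2 (S ∩ U2) (f ω) = Measure.map f μ := by
      refine Measure.ext fun B hB => ?_
      rw [Measure.map_apply hf hB, hL2 (S ∩ U2) Set.inter_subset_right ω B hB,
        Set.preimage_inter]
    -- ambient measurability of the LHS integrand
    have hpw : Measurable fun ω₂' : ∀ t, E2 t => U2.piecewise ω₂' (f ω) := by
      refine measurable_pi_lambda _ fun t => ?_
      by_cases ht : t ∈ U2
      · simpa [Set.piecewise, ht] using measurable_pi_apply t
      · simp [Set.piecewise, ht]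
    have hmeasLHS : Measurable fun ω₂' : ∀ t, E2 t => g (U2.piecewise ω₂' (f ω)) :=
      (hgmeas.mono (piH_le _) le_rfl).comp hpw
    rw [hL2map, MeasureTheory.lintegral_map hmeasLHS hf]
    refine lintegral_congr fun ω'' => ?_
    -- pointwise equality of integrands
    set c : ∀ t, E1 t := (ρ ⁻¹' U2).piecewise ω'' ω with hc
    -- G : ℋ²_{U2}-measurable
    have hqmeas : @Measurable _ _ (piH E2 U2) (piH E2 (S ∪ U2))
        (fun ω₂' => U2.piecewise ω₂' (f ω)) := by
      refine measurable_to_piH fun t ht => ?_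
      by_cases htU : t ∈ U2
      · simp only [Set.piecewise_eq_of_mem _ _ _ htU]
        exact measurable_eval_piH htU
      · simp only [Set.piecewise_eq_of_notMem _ _ _ htU]
        exact measurable_const
    have hGmeas : Measurable[piH E2 U2] fun ω₂' => g (U2.piecewise ω₂' (f ω)) :=
      hgmeas.comp hqmeas
    -- step B : G (f ω'') = G (f c)
    have stepB : g (U2.piecewise (f ω'') (f ω)) = g (U2.piecewise (f c) (f ω)) := by
      refine abstract_congr hadm hGmeas fun t ht => ?_
      exact (Set.piecewise_eq_of_mem _ _ _ ht).symm
    -- step A : g (U2.piecewise (f c) (f ω)) = g (f c)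
    have stepA : g (U2.piecewise (f c) (f ω)) = g (f c) := by
      have hφmeas : Measurable[piH E2 (S \ U2)]
          fun y : ∀ t, E2 t => g (U2.piecewise (f c) y) := by
        refine hgmeas.comp (measurable_to_piH fun t ht => ?_)
        by_cases htU : t ∈ U2
        · simp only [Set.piecewise_eq_of_mem _ _ _ htU]
          exact measurable_const
        · simp only [Set.piecewise_eq_of_notMem _ _ _ htU]
          rcases ht with ht | ht
          · exact measurable_eval_piH (show t ∈ S \ U2 from ⟨ht, htU⟩)
          · exact absurd ht htU
      have := abstract_congr hadm (φ := fun y => g (U2.piecewise (f c) y)) hφmeas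
        (x := ω) (y := c) ?_
      · rw [this, Set.piecewise_same]
      · intro t ht
        have htU : t ∉ ρ ⁻¹' U2 := fun h => ht.2 h
        simp [hc, Set.piecewise, htU]
    -- finish with interventional consistency of the original kernels
    rw [stepB, stepA]
    show C2.K (S ∪ U2) (f c) A = _
    rw [hint (S ∪ U2) A hA c, Set.preimage_union]
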